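/- Let H = ⟨G, t | t⁻¹ u₀ t = v₀⟩ be an HNN-extension of G = ⟨X⟩ with associated cyclic subgroups generated by u₀ and v₀. Suppose u, v ∈ G are conjugate in H. Then either u and v are conjugate in G, or both u and v are commensurable in G with at least one of u₀ and v₀ (i.e., some nonzero powers are conjugate in G to nonzero powers of u₀ or v₀). -/

import Mathlib

open HNNExtension

namespace HNNConjAux

variable {G : Type*} [Group G] {A B : Subgroup G} {φ : A ≃* B}

/-- The chain condition on reduced words. -/
def C (A B : Subgroup G) : (ℤˣ × G) → (ℤˣ × G) → Prop :=
  fun a b => a.2 ∈ toSubgroup A B a.1 → a.1 = b.1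

/-- Product of the tail of a reduced word. -/
def lp (φ : A ≃* B) (l : List (ℤˣ × G)) : HNNExtension G A B φ :=
  (l.map fun x => t ^ (x.1 : ℤ) * HNNExtension.of x.2).prod

@[simp] lemma lp_nil (φ : A ≃* B) : lp φ ([] : List (ℤˣ × G)) = 1 := rfl

@[simp] lemma lp_cons (φ : A ≃* B) (p : ℤˣ × G) (l : List (ℤˣ × G)) :
    lp φ (p :: l) = (t ^ (p.1 : ℤ) * HNNExtension.of p.2) * lp φ l := by
  simp [lp]

@[simp] lemma lp_append (φ : A ≃* B) (l₁ l₂ : List (ℤˣ × G)) :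
    lp φ (l₁ ++ l₂) = lp φ l₁ * lp φ l₂ := by
  simp [lp]

lemma units_eq_neg {a b : ℤˣ} (h : a ≠ b) : a = -b := by
  rcases Int.units_eq_one_or a with rfl | rfl <;>
    rcases Int.units_eq_one_or b with rfl | rfl <;> simp_all

lemma tconj (φ : A ≃* B) (ε : ℤˣ) (a : toSubgroup A B ε) :
    (t ^ (ε : ℤ) : HNNExtension G A B φ) * HNNExtension.of (a : G) * (t ^ (ε : ℤ))⁻¹ =
      HNNExtension.of ((toSubgroupEquiv φ ε a : G)) := by
  rcases Int.units_eq_one_or ε with rfl | rfl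
  · simp [equiv_eq_conj]
    exact (equiv_eq_conj a).symm
  · simp only [Units.val_neg, Units.val_one, zpow_neg, zpow_one, inv_inv,
      toSubgroupEquiv_neg_one]
    exact (equiv_symm_eq_conj a).symm

/-- The list for the reduced form of `w * a * w⁻¹` where `w = of h * lp l`, assuming the
innermost conjugate does not lie in the relevant subgroup. -/
def conjL : G → List (ℤˣ × G) → G → List (ℤˣ × G)
  | _, [], _ => []
  | h, [p], a => [(p.1, p.2 * a * p.2⁻¹), (-p.1, h⁻¹)]
  | h, p :: q :: l, a => p :: (conjL p.2 (q :: l) a ++ [(-p.1, h⁻¹)])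

lemma conjL_ne_nil (h : G) (l : List (ℤˣ × G)) (a : G) (hl : l ≠ []) :
    conjL h l a ≠ [] := by
  match l with
  | [p] => simp [conjL]
  | p :: q :: l => simp [conjL]

lemma conjL_head_fst (h : G) (l : List (ℤˣ × G)) (a : G) (hl : l ≠ []) :
    (conjL h l a).head?.map Prod.fst = l.head?.map Prod.fst := by
  match l with
  | [p] => simp [conjL]
  | p :: q :: l => simp [conjL]

lemma conjL_getLast? (h : G) (p : ℤˣ × G) (l : List (ℤˣ × G)) (a : G) :
    (conjL h (p :: l) a).getLast? = some (-p.1, h⁻¹) := by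
  match l with
  | [] => simp [conjL]
  | q :: l =>
    show (p :: (conjL p.2 (q :: l) a ++ [(-p.1, h⁻¹)])).getLast? = _
    rw [← List.cons_append, List.getLast?_concat]

lemma prod_conjL (φ : A ≃* B) (l : List (ℤˣ × G)) :
    ∀ (h a : G), l ≠ [] →
      HNNExtension.of h * lp φ (conjL h l a) =
        (HNNExtension.of h * lp φ l) * HNNExtension.of a *
          (HNNExtension.of h * lp φ l)⁻¹ := by
  induction l with
  | nil => simp
  | cons p l ih =>
    intro h a _
    cases l with
    | nil =>
      show HNNExtension.of h * lp φ [(p.1, p.2 * a * p.2⁻¹), (-p.1, h⁻¹)] = _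
      simp only [lp_cons, lp_nil, mul_one, map_mul, map_inv, Units.val_neg, zpow_neg,
        mul_inv_rev, inv_inv]
      group
    | cons q l' =>
      show HNNExtension.of h * lp φ (p :: (conjL p.2 (q :: l') a ++ [(-p.1, h⁻¹)])) = _
      have ihe := ih p.2 a (by simp)
      simp only [lp_cons, lp_append, lp_nil, mul_one, map_inv, Units.val_neg, zpow_neg,
        mul_inv_rev, inv_inv] at ihe ⊢
      rw [show HNNExtension.of h * (t ^ (p.1 : ℤ) * HNNExtension.of p.2 *
            (lp φ (conjL p.2 (q :: l') a) *
            ((t ^ (p.1 : ℤ))⁻¹ * (HNNExtension.of h)⁻¹))) =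
          HNNExtension.of h * t ^ (p.1 : ℤ) *
            (HNNExtension.of p.2 * lp φ (conjL p.2 (q :: l') a)) *
            ((t ^ (p.1 : ℤ))⁻¹ * (HNNExtension.of h)⁻¹) by group]
      rw [ihe]
      group

lemma chain_conjL (a : G) (l : List (ℤˣ × G)) :
    ∀ (h : G) (hl : l ≠ []),
      l.Chain' (C A B) →
      (l.getLast hl).2 * a * (l.getLast hl).2⁻¹ ∉ toSubgroup A B (l.getLast hl).1 →
      (conjL h l a).Chain' (C A B) := by
  induction l with
  | nil => simp
  | cons p l ih =>
    intro h hl hchain hlast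
    cases l with
    | nil =>
      show List.Chain' (C A B) [(p.1, p.2 * a * p.2⁻¹), (-p.1, h⁻¹)]
      refine List.isChain_cons_cons.2 ⟨?_, List.isChain_singleton _⟩
      intro hmem
      exact absurd hmem hlast
    | cons q l' =>
      have hcc := List.isChain_cons_cons.1 hchain
      have hlast' : ((q :: l').getLast (by simp)).2 * a *
          ((q :: l').getLast (by simp)).2⁻¹ ∉
            toSubgroup A B ((q :: l').getLast (by simp)).1 := by
        rwa [List.getLast_cons (by simp : (q :: l') ≠ [])] at hlast
      have hX : (conjL p.2 (q :: l') a).Chain' (C A B) :=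
        ih p.2 (by simp) hcc.2 hlast'
      show List.Chain' (C A B) (p :: (conjL p.2 (q :: l') a ++ [(-p.1, h⁻¹)]))
      refine List.isChain_cons.2 ⟨?_, ?_⟩
      · intro y hy
        rw [List.head?_append_of_ne_nil _ (conjL_ne_nil p.2 (q :: l') a (by simp))] at hy
        have hf : (conjL p.2 (q :: l') a).head?.map Prod.fst = some q.1 := by
          rw [conjL_head_fst p.2 (q :: l') a (by simp)]; simp
        have hy1 : y.1 = q.1 := by
          rw [hy] at hf; simpa using hf
        intro hmem
        rw [hy1]
        exact hcc.1 hmem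
      · refine List.IsChain.append hX (List.isChain_singleton _) ?_
        intro x hx y hy
        rw [conjL_getLast? p.2 q l' a] at hx
        simp only [List.head?_cons, Option.mem_def, Option.some.injEq] at hx hy
        subst hx
        subst hy
        intro hmem
        show -q.1 = -p.1
        simp only [neg_inj]
        by_contra hne
        have h1 : p.1 = -q.1 := units_eq_neg (fun hh => hne hh.symm)
        have hp : p.2 ∈ toSubgroup A B p.1 := by
          rw [h1]
          simpa using hmem
        exact hne (hcc.1 hp).symm

/-- The core lemma: if a reduced word conjugates `of u` to `of v`, then `u` and `v` are
conjugate in `G`, or both are conjugate in `G` into `A` or `B`. -/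
lemma key (φ : A ≃* B) (l : List (ℤˣ × G)) :
    ∀ (hd : G), l.Chain' (C A B) → ∀ (u v : G),
      (HNNExtension.of hd * lp φ l) * HNNExtension.of u *
        (HNNExtension.of hd * lp φ l)⁻¹ = HNNExtension.of v →
      IsConj u v ∨
        ((∃ ε c, c * u * c⁻¹ ∈ toSubgroup A B ε) ∧
          (∃ ε c, c * v * c⁻¹ ∈ toSubgroup A B ε)) := by
  induction l using List.reverseRecOn with
  | nil =>
    intro hd _ u v heq
    left
    refine isConj_iff.2 ⟨hd, HNNExtension.of_injective (φ := φ) ?_⟩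
    simpa [map_mul, map_inv] using heq
  | append_singleton L p ih =>
    intro hd hchain u v heq
    by_cases hmem : p.2 * u * p.2⁻¹ ∈ toSubgroup A B p.1
    · -- the innermost pinch cancels
      set a' : G := (toSubgroupEquiv φ p.1 ⟨p.2 * u * p.2⁻¹, hmem⟩ : G) with ha'
      have heq' : (HNNExtension.of hd * lp φ L) * HNNExtension.of a' *
          (HNNExtension.of hd * lp φ L)⁻¹ = HNNExtension.of v := by
        rw [← heq]
        have ht := tconj φ p.1 ⟨p.2 * u * p.2⁻¹, hmem⟩
        rw [← ha'] at ht
        rw [← ht]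
        simp only [lp_append, lp_cons, lp_nil, mul_one, map_mul, map_inv, mul_inv_rev, inv_inv]
        group
      have hchain' : L.Chain' (C A B) := hchain.prefix ⟨[p], rfl⟩
      rcases ih hd hchain' a' v heq' with hconj | ⟨_, hv⟩
      · right
        refine ⟨⟨p.1, p.2, hmem⟩, ?_⟩
        obtain ⟨d, hd'⟩ := isConj_iff.1 hconj
        refine ⟨-p.1, d⁻¹, ?_⟩
        have hda : d⁻¹ * v * d⁻¹⁻¹ = a' := by rw [← hd']; group
        rw [hda, ha']
        exact (toSubgroupEquiv φ p.1 ⟨p.2 * u * p.2⁻¹, hmem⟩).2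
      · exact Or.inr ⟨⟨p.1, p.2, hmem⟩, hv⟩
    · -- produce a reduced word with t's representing of v; contradiction with Britton
      exfalso
      have hlast : ((L ++ [p]).getLast (by simp)) = p := List.getLast_concat
      have hZchain : (conjL hd (L ++ [p]) u).Chain' (C A B) := by
        refine chain_conjL u (L ++ [p]) hd (by simp) hchain ?_
        rw [hlast]
        exact hmem
      let Z : HNNExtension.NormalWord.ReducedWord G A B :=
        ⟨hd, conjL hd (L ++ [p]) u, hZchain⟩
      have hZprod : Z.prod φ = HNNExtension.of v := by
        have h1 : Z.prod φ = HNNExtension.of hd * lp φ (conjL hd (L ++ [p]) u) := rfl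
        rw [h1, prod_conjL φ (L ++ [p]) hd u (by simp)]
        exact heq
      have hnil := HNNExtension.ReducedWord.toList_eq_nil_of_mem_of_range φ Z
        ⟨v, hZprod.symm⟩
      exact conjL_ne_nil hd (L ++ [p]) u (by simp) hnil

end HNNConjAux

/-- `x` and `y` are commensurable in `G`: some nonzero power of `x` is conjugate in `G`
to some nonzero power of `y`. -/
def Commensurate {G : Type*} [Group G] (x y : G) : Prop :=
  ∃ m n : ℤ, m ≠ 0 ∧ n ≠ 0 ∧ IsConj (x ^ m) (y ^ n)

theorem stmt10 {G : Type*} [Group G] (u₀ v₀ : G)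
    (φ : (Subgroup.zpowers u₀) ≃* (Subgroup.zpowers v₀))
    (hφ : ((φ ⟨u₀, Subgroup.mem_zpowers u₀⟩ : Subgroup.zpowers v₀) : G) = v₀)
    (u v : G)
    (h : IsConj
      (HNNExtension.of u : HNNExtension G (Subgroup.zpowers u₀) (Subgroup.zpowers v₀) φ)
      (HNNExtension.of v)) :
    IsConj u v ∨
      ((Commensurate u u₀ ∨ Commensurate u v₀) ∧ (Commensurate v u₀ ∨ Commensurate v v₀)) := by
  classical
  obtain ⟨c, hc⟩ := isConj_iff.1 h
  by_cases hu1 : u = 1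
  · subst hu1
    have hv : (HNNExtension.of v :
        HNNExtension G (Subgroup.zpowers u₀) (Subgroup.zpowers v₀) φ) = HNNExtension.of 1 := by
      rw [← hc]; simp
    left
    rw [HNNExtension.of_injective φ hv]
  by_cases hv1 : v = 1
  · exfalso
    apply hu1
    have h2 : (HNNExtension.of u :
        HNNExtension G (Subgroup.zpowers u₀) (Subgroup.zpowers v₀) φ) = HNNExtension.of 1 := by
      have h3 : c * HNNExtension.of u * c⁻¹ = 1 := by rw [hc, hv1]; simp
      have h4 := congr_arg (fun x => c⁻¹ * x * c) h3
      simp only [mul_assoc, inv_mul_cancel_left, mul_one, mul_inv_cancel,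
        inv_mul_cancel] at h4
      simp only [map_one]
      rw [← h4]
    exact HNNExtension.of_injective φ h2
  -- get a reduced word for c
  rcases HNNExtension.NormalWord.TransversalPair.nonempty G
    (Subgroup.zpowers u₀) (Subgroup.zpowers v₀) with ⟨d⟩
  set w := HNNExtension.NormalWord.equiv φ d c with hwdef
  have hw : (w : HNNExtension.NormalWord d).prod φ = c :=
    (HNNExtension.NormalWord.equiv φ d).symm_apply_apply c
  have heq : (HNNExtension.of w.head * HNNConjAux.lp φ w.toList) * HNNExtension.of u *
      (HNNExtension.of w.head * HNNConjAux.lp φ w.toList)⁻¹ = HNNExtension.of v := by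
    have h5 : (w : HNNExtension.NormalWord d).prod φ =
        HNNExtension.of w.head * HNNConjAux.lp φ w.toList := rfl
    rw [← h5, hw]
    exact hc
  rcases HNNConjAux.key φ w.toList w.head w.chain u v heq with
    hconj | ⟨⟨ε₁, c₁, h₁⟩, ⟨ε₂, c₂, h₂⟩⟩
  · exact Or.inl hconj
  right
  have conv : ∀ (x : G), x ≠ 1 → ∀ (ε : ℤˣ) (cc : G),
      cc * x * cc⁻¹ ∈ HNNExtension.toSubgroup (Subgroup.zpowers u₀) (Subgroup.zpowers v₀) ε →
      (Commensurate x u₀ ∨ Commensurate x v₀) := by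
    intro x hx ε cc hcc
    rcases Int.units_eq_one_or ε with rfl | rfl
    · rw [HNNExtension.toSubgroup_one] at hcc
      obtain ⟨k, hk⟩ := Subgroup.mem_zpowers_iff.1 hcc
      have hk0 : k ≠ 0 := by
        rintro rfl
        apply hx
        have h6 : cc * x * cc⁻¹ = 1 := by rw [← hk]; simp
        have h7 := congr_arg (fun y => cc⁻¹ * y * cc) h6
        simpa [mul_assoc] using h7
      exact Or.inl ⟨1, k, one_ne_zero, hk0, by
        rw [zpow_one]; exact isConj_iff.2 ⟨cc, hk.symm⟩⟩
    · rw [HNNExtension.toSubgroup_neg_one] at hcc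
      obtain ⟨k, hk⟩ := Subgroup.mem_zpowers_iff.1 hcc
      have hk0 : k ≠ 0 := by
        rintro rfl
        apply hx
        have h6 : cc * x * cc⁻¹ = 1 := by rw [← hk]; simp
        have h7 := congr_arg (fun y => cc⁻¹ * y * cc) h6
        simpa [mul_assoc] using h7
      exact Or.inr ⟨1, k, one_ne_zero, hk0, by
        rw [zpow_one]; exact isConj_iff.2 ⟨cc, hk.symm⟩⟩
  exact ⟨conv u hu1 ε₁ c₁ h₁, conv v hv1 ε₂ c₂ h₂⟩
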